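/- Let T = (V, E) be a finite tree, let F ⊆ V with |F| ≥ 2, let v₀ ∉ V be a new vertex, and let T' be the graph on V ∪ {v₀} with edge set E ∪ { {v₀, u} : u ∈ F }. Then an edge e ∈ E lies on the unique path in T between some pair of distinct vertices of F if and only if e lies on some cycle of T'. -/

import Mathlib

/-- The star edges joining the new vertex `v₀ = none` to the vertices of `F`. -/
def starEdges {V : Type*} (F : Set V) : Set (Sym2 (Option V)) :=
  {e | ∃ u ∈ F, e = s((none : Option V), some u)}

/-- Edge sets on `V` lifted to the vertex set `Option V` (`V` together with `v₀ = none`). -/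
def liftEdges {V : Type*} (X : Set (Sym2 V)) : Set (Sym2 (Option V)) :=
  Sym2.map some '' X

section Aux

variable {V : Type*} (G : SimpleGraph V) (F : Set V)

/-- The augmented graph. -/
abbrev bigG : SimpleGraph (Option V) :=
  SimpleGraph.fromEdgeSet (liftEdges G.edgeSet ∪ starEdges F)

lemma bigG_adj_some_some {a b : V} :
    (bigG G F).Adj (some a) (some b) ↔ G.Adj a b := by
  rw [SimpleGraph.fromEdgeSet_adj]
  constructor
  · rintro ⟨(⟨e', he', heq⟩ | ⟨u, hu, heq⟩), hne⟩
    · have : e' = s(a, b) :=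
        Sym2.map.injective (Option.some_injective V) (by rw [heq, Sym2.map_pair_eq])
      subst this; exact he'
    · exfalso
      have : (none : Option V) ∈ s((some a : Option V), some b) := by
        rw [heq]; exact Sym2.mem_mk_left _ _
      simp at this
  · intro h
    exact ⟨Or.inl ⟨s(a, b), h, by rw [Sym2.map_pair_eq]⟩, by simpa using h.ne⟩

lemma bigG_adj_none_some {u : V} :
    (bigG G F).Adj none (some u) ↔ u ∈ F := by
  rw [SimpleGraph.fromEdgeSet_adj]
  constructor
  · rintro ⟨(⟨e', _, heq⟩ | ⟨w, hw, heq⟩), _⟩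
    · exfalso
      have : (none : Option V) ∈ Sym2.map some e' := by
        rw [heq]; exact Sym2.mem_mk_left _ _
      rw [Sym2.mem_map] at this
      obtain ⟨x, _, hx⟩ := this
      simp at hx
    · rw [Sym2.eq_iff] at heq
      rcases heq with ⟨_, h2⟩ | ⟨h1, _⟩
      · obtain rfl : u = w := Option.some.inj h2
        exact hw
      · simp at h1
  · intro h
    exact ⟨Or.inr ⟨u, h, rfl⟩, by simp⟩

/-- Project a walk in the augmented graph avoiding `none` down to `G`. -/
lemma proj_walk {s t : Option V} (q : (bigG G F).Walk s t) :
    (none : Option V) ∉ q.support → ∀ x y : V, s = some x → t = some y →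
      ∃ p : G.Walk x y, q.edges = p.edges.map (Sym2.map some) ∧
        q.support = p.support.map some := by
  induction q with
  | nil =>
    rintro _ x y rfl hy
    obtain rfl := Option.some.inj hy
    exact ⟨.nil, by simp, by simp⟩
  | @cons a b c h q ih =>
    rintro hn x y rfl hc2
    rw [SimpleGraph.Walk.support_cons, List.mem_cons] at hn
    push_neg at hn
    have hnq : (none : Option V) ∉ q.support := hn.2
    have hb : b ≠ none := fun hb => hnq (hb ▸ q.start_mem_support)
    obtain ⟨z, rfl⟩ := Option.ne_none_iff_exists'.mp hb
    obtain ⟨p, hpe, hps⟩ := ih hnq z y rfl hc2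
    have hadj : G.Adj x z := (bigG_adj_some_some G F).mp h
    exact ⟨SimpleGraph.Walk.cons hadj p, by simp [hpe, Sym2.map_pair_eq],
      by simp [hps]⟩

/-- A cycle in the augmented graph avoiding `none` would give a cycle in `G`. -/
lemma no_cycle_avoid (hac : G.IsAcyclic) {x : Option V} (c : (bigG G F).Walk x x)
    (hc : c.IsCycle) (hn : (none : Option V) ∉ c.support) : False := by
  have hx : x ≠ none := fun h => hn (h ▸ c.start_mem_support)
  cases c with
  | nil => exact absurd hc SimpleGraph.Walk.IsCycle.not_of_nil
  | @cons _ w _ h q =>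
    obtain ⟨hq, hne⟩ := (SimpleGraph.Walk.cons_isCycle_iff q h).mp hc
    rw [SimpleGraph.Walk.support_cons, List.mem_cons] at hn
    push_neg at hn
    have hnq : (none : Option V) ∉ q.support := hn.2
    have hw : w ≠ none := fun hb => hnq (hb ▸ q.start_mem_support)
    obtain ⟨a, rfl⟩ := Option.ne_none_iff_exists'.mp hx
    obtain ⟨b, rfl⟩ := Option.ne_none_iff_exists'.mp hw
    obtain ⟨p, hpe, hps⟩ := proj_walk G F q hnq b a rfl rfl
    have hpath : p.IsPath := by
      rw [SimpleGraph.Walk.isPath_def]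
      have := hq.support_nodup
      rw [hps] at this
      exact this.of_map _
    have hadj : G.Adj a b := (bigG_adj_some_some G F).mp h
    have hmem : s(a, b) ∉ p.edges := by
      intro hmem
      apply hne
      rw [hpe]
      exact List.mem_map.mpr ⟨s(a, b), hmem, by rw [Sym2.map_pair_eq]⟩
    exact hac _ ((SimpleGraph.Walk.cons_isCycle_iff p hadj).mpr ⟨hpath, hmem⟩)

lemma main_rev (hac : G.IsAcyclic) {e : Sym2 V}
    (c : (bigG G F).Walk none none) (hc : c.IsCycle)
    (he : Sym2.map some e ∈ c.edges) :
    ∃ u ∈ F, ∃ v ∈ F, u ≠ v ∧ ∃ p : G.Walk u v, p.IsPath ∧ e ∈ p.edges := by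
  induction e using Sym2.ind with
  | _ a b =>
  rw [Sym2.map_pair_eq] at he
  cases c with
  | nil => exact absurd hc SimpleGraph.Walk.IsCycle.not_of_nil
  | @cons _ w _ h q =>
    obtain ⟨hq, _⟩ := (SimpleGraph.Walk.cons_isCycle_iff q h).mp hc
    have hnone : ∀ z : Option V, s((some a : Option V), some b) = s(none, z) → False := by
      intro z hz
      rw [Sym2.eq_iff] at hz
      rcases hz with ⟨h1, _⟩ | ⟨_, h2⟩ <;> simp_all
    rw [SimpleGraph.Walk.edges_cons, List.mem_cons] at he
    rcases he with he | he
    · exact absurd he (fun h' => hnone w h')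
    have her : s((some a : Option V), some b) ∈ q.reverse.edges := by
      rw [SimpleGraph.Walk.edges_reverse, List.mem_reverse]; exact he
    obtain ⟨r, hr, her, -⟩ :
        ∃ r : (bigG G F).Walk none w, r.IsPath ∧
          s((some a : Option V), some b) ∈ r.edges ∧ r.length = q.length :=
      ⟨q.reverse, hq.reverse, her, q.length_reverse⟩
    cases r with
    | nil => exact absurd rfl h.ne
    | @cons _ z _ h2 r2 =>
      rw [SimpleGraph.Walk.cons_isPath_iff] at hr
      obtain ⟨hr2, hnz⟩ := hr
      have hz : z ≠ none := fun hb => hnz (hb ▸ r2.start_mem_support)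
      have hw : w ≠ none := fun hb => hnz (hb ▸ r2.end_mem_support)
      obtain ⟨v, rfl⟩ := Option.ne_none_iff_exists'.mp hz
      obtain ⟨u, rfl⟩ := Option.ne_none_iff_exists'.mp hw
      have huF : u ∈ F := (bigG_adj_none_some G F).mp h
      have hvF : v ∈ F := (bigG_adj_none_some G F).mp h2
      rw [SimpleGraph.Walk.edges_cons, List.mem_cons] at her
      rcases her with her | her
      · exact absurd her (fun h' => hnone _ h')
      have hvu : v ≠ u := by
        rintro rfl
        have : r2 = SimpleGraph.Walk.nil := SimpleGraph.Walk.isPath_iff_eq_nil.mp hr2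
        rw [this] at her
        simp at her
      obtain ⟨p, hpe, hps⟩ := proj_walk G F r2 hnz v u rfl rfl
      have hpath : p.IsPath := by
        rw [SimpleGraph.Walk.isPath_def]
        have := hr2.support_nodup
        rw [hps] at this
        exact this.of_map _
      refine ⟨v, hvF, u, huF, hvu, p, hpath, ?_⟩
      rw [hpe] at her
      rw [← Sym2.map_pair_eq some a b] at her
      exact (List.mem_map_of_injective (Sym2.map.injective (Option.some_injective V))).mp her

lemma main_fwd {e : Sym2 V} {u v : V} (hu : u ∈ F) (hv : v ∈ F) (huv : u ≠ v)
    (p : G.Walk u v) (hp : p.IsPath) (he : e ∈ p.edges) :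
    ∃ (x : Option V) (c : (bigG G F).Walk x x),
      c.IsCycle ∧ Sym2.map some e ∈ c.edges := by
  let hom : G →g bigG G F := ⟨some, fun h => (bigG_adj_some_some G F).mpr h⟩
  have hominj : Function.Injective hom := Option.some_injective V
  let q := p.map hom
  have hqpath : q.IsPath := SimpleGraph.Walk.map_isPath_of_injective hominj hp
  have hqsupp : q.support = p.support.map some := p.support_map hom
  have hqedges : q.edges = p.edges.map (Sym2.map some) := p.edges_map hom
  have hnq : (none : Option V) ∉ q.support := by
    rw [hqsupp]; simp
  have hnqe : ∀ ed ∈ q.edges, (none : Option V) ∉ ed := by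
    intro ed hed
    rw [hqedges] at hed
    obtain ⟨e', _, rfl⟩ := List.mem_map.mp hed
    intro hmem
    obtain ⟨y, _, hy⟩ := Sym2.mem_map.mp hmem
    simp at hy
  have h1 : (bigG G F).Adj none (some u) := (bigG_adj_none_some G F).mpr hu
  have h2 : (bigG G F).Adj (some v) none := ((bigG_adj_none_some G F).mpr hv).symm
  let P : (bigG G F).Walk none (some v) := SimpleGraph.Walk.cons h1 q
  have hP : P.IsPath := (SimpleGraph.Walk.cons_isPath_iff h1 q).mpr ⟨hqpath, hnq⟩
  have hPe : P.edges = s((none : Option V), some u) :: q.edges := rfl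
  have hcyc : (SimpleGraph.Walk.cons h2 P).IsCycle := by
    refine (SimpleGraph.Walk.cons_isCycle_iff P h2).mpr ⟨hP, ?_⟩
    rw [hPe, List.mem_cons]
    rintro (hbad | hbad)
    · rw [Sym2.eq_iff] at hbad
      rcases hbad with ⟨hb1, _⟩ | ⟨hb1, hb2⟩
      · simp at hb1
      · exact huv (Option.some.inj hb1).symm
    · exact hnqe _ hbad (Sym2.mem_mk_right _ _)
  refine ⟨some v, SimpleGraph.Walk.cons h2 P, hcyc, ?_⟩
  rw [SimpleGraph.Walk.edges_cons, hPe]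
  refine List.mem_cons_of_mem _ (List.mem_cons_of_mem _ ?_)
  rw [hqedges]
  exact List.mem_map_of_mem he

end Aux

/-- in a tree `T`, an edge `e` lies on the (unique) path between some pair of
distinct vertices of `F` iff `e` lies on some cycle of the graph `T'` obtained by adjoining
a new vertex `v₀` joined to each vertex of `F`. -/
theorem stmt_19 {V : Type*} [Fintype V] (G : SimpleGraph V) (hT : G.IsTree)
    (F : Set V) (hF : 2 ≤ F.ncard) :
    ∀ e ∈ G.edgeSet,
      ((∃ u ∈ F, ∃ v ∈ F, u ≠ v ∧ ∃ p : G.Walk u v, p.IsPath ∧ e ∈ p.edges) ↔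
        (∃ (x : Option V)
          (c : (SimpleGraph.fromEdgeSet (liftEdges G.edgeSet ∪ starEdges F)).Walk x x),
          c.IsCycle ∧ Sym2.map some e ∈ c.edges)) := by
  intro e he
  constructor
  · rintro ⟨u, hu, v, hv, huv, p, hp, hep⟩
    exact main_fwd G F hu hv huv p hp hep
  · rintro ⟨x, c, hc, hec⟩
    by_cases hn : (none : Option V) ∈ c.support
    · classical
      exact main_rev G F hT.IsAcyclic (c.rotate _ hn) (hc.rotate hn)
        ((c.rotate_edges _ hn).mem_iff.mpr hec)
    · exact (no_cycle_avoid G F hT.IsAcyclic c hc hn).elim
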